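/- Let 0 → A → E → B → 0 be an abelian extension of perm algebras (so the multiplication of A is trivial), with induced B-bimodule structure (⊳, ⊲) on A and corresponding 2-cocycle χ. A pair (β, γ) ∈ Aut_{⊳,⊲}(A,B) of compatible automorphisms is induced by some automorphism of E preserving A if and only if there exists a linear map λ : B → A such that β(χ(b1,b2)) = χ(γ(b1), γ(b2)) − γ(b1)⊳λ(γ(b2)) + λ(γ(b1)γ(b2)) − λ(γ(b1))⊲γ(b2) for all b1, b2 ∈ B. -/

import Mathlib

/-- The multiplication of the abelian extension `E = A ⋊_χ B`
(the `B`-bimodule `A` has trivial multiplication):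
`(a₁,b₁)(a₂,b₂) = (b₁⊳a₂ + a₁⊲b₂ + χ(b₁,b₂), b₁b₂)`. -/
def abelianExtMul {k A B : Type*} [Field k] [AddCommGroup A] [Module k A]
    [AddCommGroup B] [Module k B]
    (mulB : B →ₗ[k] B →ₗ[k] B)
    (tri : B →ₗ[k] A →ₗ[k] A) (tir : A →ₗ[k] B →ₗ[k] A) (χ : B →ₗ[k] B →ₗ[k] A) :
    A × B → A × B → A × B :=
  fun p q => (tri p.2 q.1 + tir p.1 q.2 + χ p.2 q.2, mulB p.2 q.2)

/-- Let `E = A ⋊_χ B` be an abelian extension of a perm algebra `B` by a `B`-bimodule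
`(A, ⊳, ⊲)` with 2-cocycle `χ`.  A pair `(β, γ)` of compatible automorphisms is induced by
an automorphism of `E` preserving `A` if and only if there is a linear map `λ : B → A` with
`β(χ(b₁,b₂)) = χ(γ(b₁),γ(b₂)) − γ(b₁)⊳λ(γ(b₂)) + λ(γ(b₁)γ(b₂)) − λ(γ(b₁))⊲γ(b₂)`. -/
theorem inducible_iff_wells {k A B : Type*} [Field k] [AddCommGroup A] [Module k A]
    [AddCommGroup B] [Module k B]
    (mulB : B →ₗ[k] B →ₗ[k] B)
    (hpB1 : ∀ x y z, mulB (mulB x y) z = mulB x (mulB y z))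
    (hpB2 : ∀ x y z, mulB x (mulB y z) = mulB x (mulB z y))
    (tri : B →ₗ[k] A →ₗ[k] A) (tir : A →ₗ[k] B →ₗ[k] A) (χ : B →ₗ[k] B →ₗ[k] A)
    -- E = A ⋊_χ B is a perm algebra (this encodes the bimodule and cocycle conditions)
    (hperm : ∀ x y z : A × B,
      abelianExtMul mulB tri tir χ (abelianExtMul mulB tri tir χ x y) z =
        abelianExtMul mulB tri tir χ x (abelianExtMul mulB tri tir χ y z) ∧
      abelianExtMul mulB tri tir χ x (abelianExtMul mulB tri tir χ y z) =
        abelianExtMul mulB tri tir χ x (abelianExtMul mulB tri tir χ z y))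
    (β : A ≃ₗ[k] A) (γ : B ≃ₗ[k] B)
    (hγ : ∀ b1 b2 : B, γ (mulB b1 b2) = mulB (γ b1) (γ b2))
    (hβ1 : ∀ (b : B) (a : A), β (tri b a) = tri (γ b) (β a))
    (hβ2 : ∀ (a : A) (b : B), β (tir a b) = tir (β a) (γ b)) :
    -- (β, γ) is inducible
    (∃ α : (A × B) ≃ₗ[k] (A × B),
      (∀ x y : A × B, α (abelianExtMul mulB tri tir χ x y) =
        abelianExtMul mulB tri tir χ (α x) (α y)) ∧
      (∀ a : A, α (a, 0) = (β a, 0)) ∧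
      (∀ b : B, (α (0, b)).2 = γ b))
    ↔
    (∃ lam : B →ₗ[k] A, ∀ b1 b2 : B,
      β (χ b1 b2) =
        χ (γ b1) (γ b2) - tri (γ b1) (lam (γ b2)) + lam (mulB (γ b1) (γ b2)) -
          tir (lam (γ b1)) (γ b2)) := by

  constructor
  · rintro ⟨α, hmul, hA, hB⟩
    refine ⟨-((LinearMap.fst k A B) ∘ₗ α.toLinearMap ∘ₗ
      (LinearMap.inr k A B) ∘ₗ γ.symm.toLinearMap), ?_⟩
    intro b1 b2
    have key := hmul (0, b1) (0, b2)
    simp only [abelianExtMul, map_zero, LinearMap.zero_apply, zero_add, add_zero] at key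
    have hsplit : ((χ b1 b2 : A), mulB b1 b2) = ((χ b1 b2 : A), (0:B)) + ((0:A), mulB b1 b2) := by
      simp
    rw [hsplit, map_add, hA] at key
    have hα : ∀ b : B, α (0, b) = ((α (0,b)).1, γ b) := fun b => Prod.ext rfl (hB b)
    rw [hα b1, hα b2] at key
    have key1 := congrArg Prod.fst key
    simp only [abelianExtMul, Prod.fst_add] at key1
    have key2 : β (χ b1 b2) = tri (γ b1) (α (0,b2)).1 + tir (α (0,b1)).1 (γ b2)
        + χ (γ b1) (γ b2) - (α (0, mulB b1 b2)).1 := by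
      rw [← key1]; abel
    simp only [LinearMap.neg_apply, LinearMap.coe_comp, Function.comp_apply,
      LinearMap.fst_apply, LinearMap.inr_apply, LinearEquiv.coe_coe,
      LinearEquiv.symm_apply_apply, ← hγ, LinearEquiv.symm_apply_apply, map_neg, neg_neg]
    rw [key2]
    abel
  · rintro ⟨lam, hlam⟩
    refine ⟨LinearEquiv.ofLinear
        ((β.toLinearMap ∘ₗ LinearMap.fst k A B
            - lam ∘ₗ γ.toLinearMap ∘ₗ LinearMap.snd k A B).prod
          (γ.toLinearMap ∘ₗ LinearMap.snd k A B))
        ((β.symm.toLinearMap ∘ₗ LinearMap.fst k A B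
            + β.symm.toLinearMap ∘ₗ lam ∘ₗ LinearMap.snd k A B).prod
          (γ.symm.toLinearMap ∘ₗ LinearMap.snd k A B)) ?_ ?_, ?_, ?_, ?_⟩
    · apply LinearMap.ext; rintro ⟨a, b⟩
      simp
    · apply LinearMap.ext; rintro ⟨a, b⟩
      simp
    · rintro ⟨a1, b1⟩ ⟨a2, b2⟩
      simp only [abelianExtMul, LinearEquiv.ofLinear_apply, LinearMap.prod_apply, Function.prod,
        LinearMap.sub_apply, LinearMap.coe_comp, Function.comp_apply, LinearMap.fst_apply,
        LinearMap.snd_apply, LinearEquiv.coe_coe, Prod.mk.injEq]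
      constructor
      · simp only [map_add, map_sub, hβ1, hβ2, hlam b1 b2, hγ, LinearMap.sub_apply]
        abel
      · exact hγ b1 b2
    · intro a
      simp
    · intro b
      simp
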